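/- Let χ be an odd real primitive Dirichlet character of modulus d. Then (L_χ'/L_χ)(1) = γ + log(2π/d) − (L_χ'/L_χ)(0), where both logarithmic derivatives are well defined since L_χ(1) ≠ 0 and L_χ(0) ≠ 0. -/

import Mathlib

open Complex Finset Real

private lemma diff_gammaR {s : ℂ} (hs : 0 < s.re) : DifferentiableAt ℂ Gammaℝ s := by
  have h1 : DifferentiableAt ℂ (fun z : ℂ => (π : ℂ) ^ (-z / 2)) s :=
    ((differentiableAt_id.neg).div_const 2).const_cpow
      (Or.inl (ofReal_ne_zero.mpr Real.pi_ne_zero))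
  have h2 : DifferentiableAt ℂ (fun z : ℂ => Complex.Gamma (z / 2)) s := by
    have hg : DifferentiableAt ℂ Complex.Gamma (s / 2) := by
      refine Complex.differentiableAt_Gamma _ (fun m => ?_)
      intro h
      have : (s / 2).re = (-(m : ℂ)).re := by rw [h]
      simp only [div_ofNat_re, neg_re, natCast_re] at this
      have hm : (0:ℝ) ≤ (m:ℝ) := m.cast_nonneg
      nlinarith
    simpa [Function.comp_def] using hg.comp s (differentiableAt_id.div_const 2)
  exact h1.mul h2

theorem stmt7 (d : ℕ) [NeZero d] (χ : DirichletCharacter ℂ d)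
    (hreal : ∀ n : ZMod d, (χ n).im = 0) (hprim : χ.IsPrimitive)
    (hodd : χ.Odd) :
    χ.LFunction 1 ≠ 0 ∧ χ.LFunction 0 ≠ 0 ∧
    deriv χ.LFunction 1 / χ.LFunction 1 =
      (Real.eulerMascheroniConstant : ℂ) + (Real.log (2 * Real.pi / d) : ℂ) -
        deriv χ.LFunction 0 / χ.LFunction 0 := by
  have hodd' : χ (-1) = -1 := hodd
  have hd0 : (d : ℂ) ≠ 0 := Nat.cast_ne_zero.mpr (NeZero.ne d)
  have hχ1 : χ ≠ 1 := by
    rintro rfl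
    rw [MulChar.one_apply isUnit_one.neg] at hodd'
    norm_num at hodd'
  have hN1 : d ≠ 1 := by
    rintro rfl
    have h1 : (-1 : ZMod 1) = 1 := Subsingleton.elim _ _
    rw [h1, map_one] at hodd'
    norm_num at hodd'
  -- χ is self-inverse
  have hsq : χ⁻¹ = χ := by
    refine MulChar.ext fun a : (ZMod d)ˣ => ?_
    rw [MulChar.inv_apply_eq_inv']
    have him := hreal a
    have habs : ‖χ (a : ZMod d)‖ = 1 := χ.unit_norm_eq_one a
    have hre : χ (a : ZMod d) = (((χ (a : ZMod d)).re : ℝ) : ℂ) := by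
      apply Complex.ext <;> simp [him]
    rw [hre] at habs ⊢
    rw [Complex.norm_real] at habs
    rcases abs_eq (by norm_num : (0:ℝ) ≤ 1) |>.mp habs with h | h <;> rw [h] <;> norm_num
  -- completed L-function and functional equation
  set Λ := χ.completedLFunction with hΛdef
  have FE : ∀ s : ℂ, Λ (1 - s) = (d : ℂ) ^ (s - 1/2) * χ.rootNumber * Λ s := by
    intro s
    have h := hprim.completedLFunction_one_sub s
    rwa [hsq] at h
  have hΛdiff : Differentiable ℂ Λ := DirichletCharacter.differentiable_completedLFunction hχ1
  have hLdiff : Differentiable ℂ χ.LFunction := DirichletCharacter.differentiable_LFunction hχ1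
  have hLfun : χ.LFunction = fun s => Λ s / Gammaℝ (s + 1) := by
    funext s
    rw [χ.LFunction_eq_completed_div_gammaFactor s (Or.inr hN1), hodd.gammaFactor_def]
  have hG1ne : Gammaℝ (0 + 1 : ℂ) ≠ 0 := Gammaℝ_ne_zero_of_re_pos (by norm_num)
  have hG2ne : Gammaℝ (1 + 1 : ℂ) ≠ 0 := Gammaℝ_ne_zero_of_re_pos (by norm_num)
  have hL1 : χ.LFunction 1 ≠ 0 := DirichletCharacter.LFunction_apply_one_ne_zero hχ1
  have hΛ1 : Λ 1 ≠ 0 := by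
    intro h0
    apply hL1
    rw [hLfun]
    simp only [h0, zero_div]
  -- from the functional equation at s = 0
  have FE0 : Λ 1 = (d : ℂ) ^ (-(1/2) : ℂ) * χ.rootNumber * Λ 0 := by
    have h := FE 0
    rw [show (1:ℂ) - 0 = 1 by ring, show (0:ℂ) - 1/2 = -(1/2) by ring] at h
    exact h
  have hW : χ.rootNumber ≠ 0 := by
    intro h
    rw [h] at FE0
    simp at FE0
    exact hΛ1 FE0
  have hΛ0 : Λ 0 ≠ 0 := by
    intro h
    rw [h, mul_zero] at FE0
    exact hΛ1 FE0
  have hL0 : χ.LFunction 0 ≠ 0 := by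
    rw [hLfun]
    exact div_ne_zero hΛ0 hG1ne
  refine ⟨hL1, hL0, ?_⟩
  -- derivative of the functional equation at 0
  have hA : (d : ℂ) ^ (-(1/2) : ℂ) * χ.rootNumber ≠ 0 := by
    intro h
    rw [h, zero_mul] at FE0
    exact hΛ1 FE0
  have hD : (d : ℂ) ^ (-(1/2) : ℂ) ≠ 0 := left_ne_zero_of_mul hA
  have hder1 : HasDerivAt (fun s => Λ (1 - s)) (-(deriv Λ 1)) 0 := by
    have h := ((hΛdiff (1 - 0)).hasDerivAt).comp 0 ((hasDerivAt_id (0:ℂ)).const_sub 1)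
    simpa [Function.comp_def] using h
  have hder2 : HasDerivAt (fun s => (d : ℂ) ^ (s - 1/2) * χ.rootNumber * Λ s)
      (((d : ℂ) ^ (-(1/2) : ℂ) * Complex.log d * χ.rootNumber) * Λ 0
        + ((d : ℂ) ^ (-(1/2) : ℂ) * χ.rootNumber) * deriv Λ 0) 0 := by
    have hc : HasDerivAt (fun s : ℂ => (d : ℂ) ^ (s - 1/2))
        ((d : ℂ) ^ (-(1/2) : ℂ) * Complex.log d) 0 := by
      have h := ((hasDerivAt_id (0:ℂ)).sub_const (1/2)).const_cpow (c := (d : ℂ)) (Or.inl hd0)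
      simpa using h
    have h := (hc.mul_const χ.rootNumber).fun_mul (hΛdiff 0).hasDerivAt
    rw [zero_sub] at h
    exact h
  have heq : deriv (fun s => Λ (1 - s)) 0
      = deriv (fun s => (d : ℂ) ^ (s - 1/2) * χ.rootNumber * Λ s) 0 := by
    congr 1
    funext s
    exact FE s
  have key : -(deriv Λ 1) = ((d : ℂ) ^ (-(1/2) : ℂ) * Complex.log d * χ.rootNumber) * Λ 0
      + ((d : ℂ) ^ (-(1/2) : ℂ) * χ.rootNumber) * deriv Λ 0 := by
    rw [← hder1.deriv, heq, hder2.deriv]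
  have hderΛ1 : deriv Λ 1 = -((d : ℂ) ^ (-(1/2) : ℂ) * χ.rootNumber * Complex.log d * Λ 0
      + (d : ℂ) ^ (-(1/2) : ℂ) * χ.rootNumber * deriv Λ 0) := by
    linear_combination -key
  have sum3 : deriv Λ 1 / Λ 1 + deriv Λ 0 / Λ 0 = -Complex.log d := by
    rw [hderΛ1, FE0]
    have hD' := hD
    generalize (d : ℂ) ^ (-(1/2) : ℂ) = a at hD' ⊢
    field_simp
    ring
  -- gamma factor log-derivatives
  have hadd : ∀ x : ℂ, DifferentiableAt ℂ (fun s : ℂ => s + 1) x := by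
    intro x; fun_prop
  have hGd1 : DifferentiableAt ℂ (fun s : ℂ => Gammaℝ (s + 1)) 1 := by
    have h := DifferentiableAt.comp (𝕜 := ℂ) (g := Gammaℝ) (f := fun s : ℂ => s + 1) 1
      (diff_gammaR (by norm_num)) (hadd 1)
    simpa [Function.comp_def] using h
  have hGd0 : DifferentiableAt ℂ (fun s : ℂ => Gammaℝ (s + 1)) 0 := by
    have h := DifferentiableAt.comp (𝕜 := ℂ) (g := Gammaℝ) (f := fun s : ℂ => s + 1) 0
      (diff_gammaR (by norm_num)) (hadd 0)
    simpa [Function.comp_def] using h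
  have E1 : deriv χ.LFunction 1 / χ.LFunction 1
      = deriv Λ 1 / Λ 1 - logDeriv (fun s : ℂ => Gammaℝ (s + 1)) 1 := by
    rw [← logDeriv_apply, ← logDeriv_apply, hLfun]
    exact logDeriv_div 1 hΛ1 hG2ne (hΛdiff 1) hGd1
  have E0 : deriv χ.LFunction 0 / χ.LFunction 0
      = deriv Λ 0 / Λ 0 - logDeriv (fun s : ℂ => Gammaℝ (s + 1)) 0 := by
    rw [← logDeriv_apply, ← logDeriv_apply, hLfun]
    exact logDeriv_div 0 hΛ0 hG1ne (hΛdiff 0) hGd0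
  have hGsum : logDeriv (fun s : ℂ => Gammaℝ (s + 1)) 0 + logDeriv (fun s : ℂ => Gammaℝ (s + 1)) 1
      = -((Real.eulerMascheroniConstant : ℂ) + Complex.log (2 * π)) := by
    have hprod : Gammaℂ = fun s : ℂ => Gammaℝ s * Gammaℝ (s + 1) := by
      funext s
      rw [Gammaℝ_mul_Gammaℝ_add_one]
    have h1 : logDeriv Gammaℂ 1 = logDeriv Gammaℝ 1 + logDeriv (fun s : ℂ => Gammaℝ (s + 1)) 1 := by
      rw [hprod]
      exact logDeriv_mul 1 (by simpa using hG1ne) hG2ne (diff_gammaR (by norm_num)) hGd1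
    have h2 : logDeriv Gammaℂ 1 = -((Real.eulerMascheroniConstant : ℂ) + Complex.log (2 * π)) := by
      rw [logDeriv_apply, Complex.hasDerivAt_Gammaℂ_one.deriv, Gammaℂ_one]
      have hπ : (π : ℂ) ≠ 0 := ofReal_ne_zero.mpr Real.pi_ne_zero
      field_simp
    have h3 : logDeriv (fun s : ℂ => Gammaℝ (s + 1)) 0 = logDeriv Gammaℝ 1 := by
      have h := logDeriv_comp (f := Gammaℝ) (g := fun s : ℂ => s + 1) (x := (0:ℂ))
        (by simpa using diff_gammaR (s := (0:ℂ) + 1) (by norm_num))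
        (differentiableAt_id.add_const 1)
      simpa [Function.comp_def] using h
    rw [h3]
    linear_combination h2 - h1
  -- coercion of the real logarithm
  have hdR : (0:ℝ) < (d:ℝ) := by
    have := Nat.pos_of_ne_zero (NeZero.ne d)
    exact_mod_cast this
  have hlog : ((Real.log (2 * Real.pi / d) : ℝ) : ℂ)
      = Complex.log (2 * π) - Complex.log (d : ℂ) := by
    rw [Real.log_div (by positivity) (ne_of_gt hdR)]
    push_cast [Complex.ofReal_log (by positivity : (0:ℝ) ≤ 2 * Real.pi),
      Complex.ofReal_log hdR.le]
    ring
  linear_combination E1 + E0 + sum3 - hGsum - hlog
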